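/- Let h : ℕ → ℝ be S-shaped with threshold t*, meaning h(t+1) − h(t) < h(t) − h(t−1) if and only if t > t*. For t ∈ ℕ, suppose s*(t) := min{s > t : h(s+1) − h(s) < (h(s) − h(t))/(s − t)} exists. Then s*(t) > t*, and the conditional concavification cconv_t(h), defined by linear interpolation between (t, h(t)) and (s*(t), h(s*(t))) on [t, s*(t)] and equal to h beyond s*(t), is concave on {s ∈ ℕ : s ≥ t} and satisfies cconv_t(h)(s) ≥ h(s) for all s ≥ t. -/

import Mathlib

/-- For an S-shaped h with crossing time s*(t), one has s*(t) > t*, and the conditional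
concavification from t is concave on {s ≥ t} and dominates h there. -/
theorem stmt7 (h : ℕ → ℝ) (tstar : ℕ)
    (hS : ∀ t : ℕ, (h (t + 2) - h (t + 1) < h (t + 1) - h t ↔ tstar < t + 1))
    (t s : ℕ) (hts : t < s)
    (hdef : h (s + 1) - h s < (h s - h t) / ((s : ℝ) - t))
    (hmin : ∀ s' : ℕ, t < s' → s' < s →
      ¬ (h (s' + 1) - h s' < (h s' - h t) / ((s' : ℝ) - t)))
    (g : ℕ → ℝ)
    (hg1 : ∀ s' : ℕ, t ≤ s' → s' ≤ s →
      g s' = (((s : ℝ) - s') / ((s : ℝ) - t)) * h t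
        + (((s' : ℝ) - t) / ((s : ℝ) - t)) * h s)
    (hg2 : ∀ s' : ℕ, s < s' → g s' = h s') :
    tstar < s ∧
    (∀ s' : ℕ, t ≤ s' → g (s' + 2) - g (s' + 1) ≤ g (s' + 1) - g s') ∧
    (∀ s' : ℕ, t ≤ s' → h s' ≤ g s') := by
  have hstR : (t : ℝ) < (s : ℝ) := by exact_mod_cast hts
  have hd : (0 : ℝ) < (s : ℝ) - t := by linarith
  -- Part 1 : tstar < s
  have part1 : tstar < s := by
    by_contra hc
    push_neg at hc
    have mono : ∀ j, j + 1 ≤ tstar → h (j + 1) - h j ≤ h (j + 2) - h (j + 1) := by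
      intro j hj
      by_contra hcon
      push_neg at hcon
      have := (hS j).mp hcon
      omega
    have chain : ∀ k j, j ≤ k → k ≤ tstar → h (j + 1) - h j ≤ h (k + 1) - h k := by
      intro k
      induction k with
      | zero =>
        intro j hjk _
        obtain rfl := Nat.le_zero.mp hjk
        exact le_rfl
      | succ n ih =>
        intro j hjk hk
        rcases Nat.eq_or_lt_of_le hjk with rfl | hlt
        · exact le_rfl
        · have h1 := ih j (by omega) (by omega)
          have h2 := mono n (by omega)
          linarith
    have sum : ∀ n, t + n ≤ s → h (t + n) - h t ≤ (n : ℝ) * (h (s + 1) - h s) := by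
      intro n
      induction n with
      | zero => intro _; simp
      | succ k ih =>
        intro hk
        have ih' := ih (by omega)
        have hch := chain s (t + k) (by omega) hc
        have he : t + (k + 1) = (t + k) + 1 := rfl
        rw [he]
        push_cast
        linarith
    have hsum := sum (s - t) (by omega)
    rw [show t + (s - t) = s from by omega] at hsum
    have hcast : ((s - t : ℕ) : ℝ) = (s : ℝ) - t := by
      push_cast [Nat.cast_sub hts.le]; ring
    rw [hcast] at hsum
    have : (h s - h t) / ((s : ℝ) - t) ≤ h (s + 1) - h s := by
      rw [div_le_iff₀ hd]
      linarith
    linarith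
  -- slope comparison lemma
  have monoA : ∀ j, t < j → j < s →
      (h j - h t) / ((j : ℝ) - t) ≤ (h (j + 1) - h t) / (((j : ℝ) + 1) - t) := by
    intro j hj1 hj2
    have hmj := hmin j hj1 hj2
    push_neg at hmj
    have hdj : (0 : ℝ) < (j : ℝ) - t := by
      have : (t : ℝ) < (j : ℝ) := by exact_mod_cast hj1
      linarith
    have hdj1 : (0 : ℝ) < ((j : ℝ) + 1) - t := by linarith
    have hmul : h j - h t ≤ ((j : ℝ) - t) * (h (j + 1) - h j) := by
      rw [div_le_iff₀ hdj] at hmj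
      linarith
    rw [div_le_div_iff₀ hdj hdj1]
    nlinarith
  have Akey : ∀ n j, t < j → j + n = s →
      (h j - h t) / ((j : ℝ) - t) ≤ (h s - h t) / ((s : ℝ) - t) := by
    intro n
    induction n with
    | zero =>
      intro j hj hjs
      obtain rfl : j = s := by omega
      exact le_rfl
    | succ k ih =>
      intro j hj hjs
      have h1 := monoA j hj (by omega)
      have h2 := ih (j + 1) (by omega) (by omega)
      push_cast at h2
      linarith
  -- domination
  have dom : ∀ s', t ≤ s' → h s' ≤ g s' := by
    intro j hj
    rcases lt_or_ge s j with hgt | hle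
    · rw [hg2 j hgt]
    · rcases Nat.eq_or_lt_of_le hj with rfl | hlt
      · rw [hg1 t le_rfl hle, sub_self, zero_div, zero_mul, add_zero,
          div_self hd.ne', one_mul]
      · have hA := Akey (s - j) j hlt (by omega)
        have hdj : (0 : ℝ) < (j : ℝ) - t := by
          have : (t : ℝ) < (j : ℝ) := by exact_mod_cast hlt
          linarith
        rw [div_le_div_iff₀ hdj hd] at hA
        rw [hg1 j hj hle]
        have hjR : (t : ℝ) < (j : ℝ) := by exact_mod_cast hlt
        rw [div_mul_eq_mul_div, div_mul_eq_mul_div, ← add_div, le_div_iff₀ hd]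
        nlinarith
  -- linear part has constant slope
  have gdiff : ∀ j, t ≤ j → j + 1 ≤ s →
      g (j + 1) - g j = (h s - h t) / ((s : ℝ) - t) := by
    intro j h1 h2
    rw [hg1 j h1 (by omega), hg1 (j + 1) (by omega) h2]
    push_cast
    field_simp
    ring
  have gs : g s = h s := by
    rw [hg1 s hts.le le_rfl]
    field_simp
    ring
  refine ⟨part1, ?_, dom⟩
  intro j hj
  rcases Nat.lt_or_ge (j + 2) (s + 1) with hcase | hcase
  · -- j + 2 ≤ s : both slopes equal m
    rw [gdiff j hj (by omega), gdiff (j + 1) (by omega) (by omega)]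
  · rcases Nat.eq_or_lt_of_le hcase with heq | hgt
    · -- j + 1 = s
      obtain rfl : s = j + 1 := by omega
      rw [gdiff j hj (by omega), hg2 (j + 2) (by omega), gs]
      linarith [hdef]
    · -- s ≤ j
      have hsj : s ≤ j := by omega
      have hconc : h (j + 2) - h (j + 1) < h (j + 1) - h j :=
        (hS j).mpr (by omega)
      rw [hg2 (j + 2) (by omega), hg2 (j + 1) (by omega)]
      rcases Nat.eq_or_lt_of_le hsj with rfl | hlt
      · rw [gs]; linarith
      · rw [hg2 j hlt]; linarith
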